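/- Let a two-type graph balancing instance be given with 1/c not an integer, let k = ⌊1/c⌋, and let k₀' be a nonnegative integer with k₀'·c < 2. If there exists an orientation with makespan at most k₀'·c, then there exists a feasible integral flow in the network N(k+1, k₀'). -/

import Mathlib

open Finset

/-- Edge `e` is incident to vertex `i` (both endpoints of a loop coincide). -/
def Incident {V E : Type} (ends : E → V × V) (e : E) (i : V) : Prop :=
  (ends e).1 = i ∨ (ends e).2 = i

instance {V E : Type} [DecidableEq V] (ends : E → V × V) (e : E) (i : V) :
    Decidable (Incident ends e i) := by
  unfold Incident; infer_instance

/-- An orientation assigns to each edge one of its endpoints. -/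
def IsOrientation {V E : Type} (ends : E → V × V) (σ : E → V) : Prop :=
  ∀ e, Incident ends e (σ e)

/-- Weighted in-degree of vertex `i` under orientation `σ`. -/
def load {V E : Type} [Fintype E] [DecidableEq V]
    (w : E → ℝ) (σ : E → V) (i : V) : ℝ :=
  ∑ e ∈ univ.filter (fun e => σ e = i), w e

/-- Sum of `f e i` over the endpoints `i` of `e`; a loop contributes a single
incident pair. -/
def endSum {V E : Type} [DecidableEq V] (ends : E → V × V) (f : E → V → ℕ) (e : E) : ℕ :=
  if (ends e).1 = (ends e).2 then f e (ends e).1 else f e (ends e).1 + f e (ends e).2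

/-- A feasible integral flow in the network `N(p, q)`: `f` is the flow on
incident pairs of big edges, `g` on incident pairs of small edges. -/
def FeasibleFlow {V E : Type} [Fintype E] [DecidableEq V]
    (ends : E → V × V) (big : E → Bool) (p q : ℕ) (f g : E → V → ℕ) : Prop :=
  (∀ e i, Incident ends e i → big e → f e i ≤ p) ∧
  (∀ e i, Incident ends e i → ¬ big e → g e i ≤ 1) ∧
  (∀ e, big e → p ≤ endSum ends f e) ∧
  (∀ e, ¬ big e → 1 ≤ endSum ends g e) ∧
  (∀ i : V, ∑ e ∈ univ.filter (fun e => big e ∧ Incident ends e i), f e i ≤ p) ∧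
  (∀ i : V, (∑ e ∈ univ.filter (fun e => big e ∧ Incident ends e i), f e i)
      + (∑ e ∈ univ.filter (fun e => ¬ big e ∧ Incident ends e i), g e i) ≤ q)

/-- Lemma 2.2: if `1/c` is not an integer and some orientation has makespan at
most `k₀'·c < 2`, where `k = ⌊1/c⌋`, then the network `N(k + 1, k₀')` admits a
feasible integral flow. -/
theorem feasible_flow_of_opt_multiple {V E : Type} [Fintype V] [Fintype E] [DecidableEq V]
    (ends : E → V × V) (c : ℝ) (hc0 : 0 < c) (hc1 : c < 1)
    (hnotint : ¬ ∃ n : ℤ, 1 / c = (n : ℝ))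
    (big : E → Bool) (w : E → ℝ) (hw : ∀ e, w e = if big e then 1 else c)
    (k : ℕ) (hk : k = ⌊1 / c⌋₊)
    (k₀' : ℕ) (hk₀' : (k₀' : ℝ) * c < 2)
    (σ : E → V) (hσ : IsOrientation ends σ)
    (hms : ∀ i, load w σ i ≤ (k₀' : ℝ) * c) :
    ∃ f g : E → V → ℕ, FeasibleFlow ends big (k + 1) k₀' f g := by
  classical
  have hcinv : (0:ℝ) ≤ 1 / c := by positivity
  have hkle : (k : ℝ) ≤ 1 / c := by rw [hk]; exact Nat.floor_le hcinv
  have hklt : (k : ℝ) < 1 / c := by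
    rcases lt_or_eq_of_le hkle with h | h
    · exact h
    · exact absurd ⟨(k : ℤ), by exact_mod_cast h.symm⟩ hnotint
  have hkc : (k : ℝ) * c < 1 := by
    have := mul_lt_mul_of_pos_right hklt hc0
    rwa [one_div, inv_mul_cancel₀ (ne_of_gt hc0)] at this
  set B : V → Finset E := fun i => univ.filter (fun e => big e = true ∧ σ e = i) with hB
  set S : V → Finset E := fun i => univ.filter (fun e => big e = false ∧ σ e = i) with hS
  have key : ∀ i, ((B i).card : ℝ) + ((S i).card : ℝ) * c ≤ (k₀' : ℝ) * c := by
    intro i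
    have hsplit : univ.filter (fun e => σ e = i) = B i ∪ S i := by
      ext e; rcases Bool.eq_false_or_eq_true (big e) with hbe | hbe <;> simp [hB, hS, hbe]
    have hdisj : Disjoint (B i) (S i) := by
      rw [Finset.disjoint_left]; intro e he1 he2
      simp [hB] at he1; simp [hS] at he2; simp [he1.1] at he2
    have hload : load w σ i = ((B i).card : ℝ) + ((S i).card : ℝ) * c := by
      unfold load
      rw [hsplit, Finset.sum_union hdisj]
      congr 1
      · rw [Finset.sum_congr rfl (fun e he => ?_), Finset.sum_const, nsmul_eq_mul, mul_one]
        simp only [hB, mem_filter] at he; simp [hw, he.2.1]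
      · rw [Finset.sum_congr rfl (fun e he => ?_), Finset.sum_const, nsmul_eq_mul]
        simp only [hS, mem_filter] at he; simp [hw, he.2.1]
    rw [← hload]; exact hms i
  have hb1 : ∀ i, (B i).card ≤ 1 := by
    intro i
    by_contra h
    push_neg at h
    have h2 : (2 : ℝ) ≤ ((B i).card : ℝ) := by exact_mod_cast h
    have := key i
    have hs0 : (0:ℝ) ≤ ((S i).card : ℝ) * c := by positivity
    linarith
  have hsumB : ∀ i, ∑ e ∈ univ.filter (fun e => big e = true ∧ Incident ends e i),
      (if big e = true ∧ σ e = i then k + 1 else 0) = (B i).card * (k + 1) := by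
    intro i
    rw [← Finset.sum_subset (s₁ := B i)
      (by intro e he; simp only [hB, mem_filter] at he ⊢
          exact ⟨he.1, he.2.1, he.2.2 ▸ hσ e⟩)
      (by intro e _ he; simp only [hB, mem_filter, mem_univ, true_and] at he
          by_cases h : big e = true ∧ σ e = i
          · exact absurd h he
          · simp [h])]
    rw [Finset.sum_congr rfl (fun e he => ?_), Finset.sum_const, smul_eq_mul]
    simp only [hB, mem_filter] at he
    simp [he.2.1, he.2.2]
  have hsumS : ∀ i, ∑ e ∈ univ.filter (fun e => ¬ big e = true ∧ Incident ends e i),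
      (if ¬ big e = true ∧ σ e = i then 1 else 0) = (S i).card := by
    intro i
    rw [← Finset.sum_subset (s₁ := S i)
      (by intro e he; simp only [hS, mem_filter] at he ⊢
          refine ⟨he.1, by simp [he.2.1], he.2.2 ▸ hσ e⟩)
      (by intro e _ he; simp only [hS, mem_filter, mem_univ, true_and] at he
          split_ifs with h
          · exact absurd ⟨by simp [h.1], h.2⟩ he
          · rfl)]
    rw [Finset.sum_congr rfl (fun e he => ?_), Finset.sum_const, smul_eq_mul, mul_one]
    simp only [hS, mem_filter] at he
    simp [he.2.1, he.2.2]
  refine ⟨fun e i => if big e = true ∧ σ e = i then k + 1 else 0,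
          fun e i => if ¬ big e = true ∧ σ e = i then 1 else 0, ?_, ?_, ?_, ?_, ?_, ?_⟩
  · intro e i _ _; dsimp only; split_ifs <;> omega
  · intro e i _ _; dsimp only; split_ifs <;> omega
  · intro e hbe
    have h := hσ e
    unfold endSum
    rcases h with h | h <;> split_ifs with hl <;> dsimp only <;>
      [skip; skip; skip; skip] <;> simp_all <;> omega
  · intro e hbe
    have h := hσ e
    unfold endSum
    rcases h with h | h <;> split_ifs with hl <;> simp_all <;> omega
  · intro i
    rw [hsumB i]
    have := hb1 i
    nlinarith [hb1 i]
  · intro i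
    rw [hsumB i, hsumS i]
    have hkey := key i
    rcases Nat.le_one_iff_eq_zero_or_eq_one.mp (hb1 i) with hb | hb <;> rw [hb]
    · rw [hb] at hkey
      have h1 : ((S i).card : ℝ) ≤ (k₀' : ℝ) :=
        le_of_mul_le_mul_right (by push_cast at hkey ⊢; linarith) hc0
      have : (S i).card ≤ k₀' := by exact_mod_cast h1
      omega
    · rw [hb] at hkey
      push_cast at hkey
      have h1 : ((k : ℝ) + (S i).card) * c < (k₀' : ℝ) * c := by ring_nf; nlinarith
      have h2 : ((k : ℝ) + (S i).card) < (k₀' : ℝ) := (mul_lt_mul_iff_of_pos_right hc0).mp h1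
      have h3 : k + (S i).card < k₀' := by exact_mod_cast h2
      omega
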